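/- Let k ≥ 1 be an integer and s ≥ 0, and for α ∈ [0,1] let h*(α) denote the smallest fixed point in [0,1] of f_α(x) = 1 − (1−α) g_{k,s}(x), where g_{k,s}(x) = ∑_{i=0}^{⌊s⌋} C(k,i) x^i (1−x)^{k−i}. Then α ↦ h*(α) is monotone nondecreasing on [0,1]. -/
import Mathlib


/-- `binCdf k s x = P(Bin(k,x) ≤ s) = ∑_{i=0}^{⌊s⌋} C(k,i) x^i (1-x)^{k-i}`,
the function `g_{k,s}(x)` of the paper. -/
noncomputable def binCdf (k : ℕ) (s : ℝ) (x : ℝ) : ℝ :=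
  ∑ i ∈ Finset.range (⌊s⌋₊ + 1), (k.choose i : ℝ) * x ^ i * (1 - x) ^ (k - i)

lemma binCdf_nonneg (k : ℕ) (s : ℝ) (x : ℝ) (hx : x ∈ Set.Icc (0:ℝ) 1) :
    0 ≤ binCdf k s x := by
  obtain ⟨h0, h1⟩ := hx
  apply Finset.sum_nonneg
  intro i _
  have : (0:ℝ) ≤ 1 - x := by linarith
  positivity

lemma binCdf_continuous (k : ℕ) (s : ℝ) : Continuous (binCdf k s) := by
  unfold binCdf
  exact continuous_finset_sum _ fun i _ => by continuity

lemma binCdf_zero (k : ℕ) (s : ℝ) : binCdf k s 0 = 1 := by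
  unfold binCdf
  rw [Finset.sum_eq_single 0]
  · simp
  · intro i _ hi
    simp [zero_pow hi]
  · simp

/-- The smallest fixed point `h*(α)` of `f_α(x) = 1 − (1−α) g_{k,s}(x)` in `[0,1]` is
monotone nondecreasing in `α`: if `α₁ ≤ α₂` and `h₁`, `h₂` are the respective smallest
fixed points, then `h₁ ≤ h₂`. -/
theorem smallest_fixedPoint_monotone (k : ℕ) (hk : 1 ≤ k) (s : ℝ) (hs : 0 ≤ s)
    (α₁ α₂ : ℝ) (hα₁ : α₁ ∈ Set.Icc (0 : ℝ) 1) (hα₂ : α₂ ∈ Set.Icc (0 : ℝ) 1)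
    (hle : α₁ ≤ α₂) (h₁ h₂ : ℝ)
    (h₁mem : h₁ ∈ Set.Icc (0 : ℝ) 1) (h₁fix : 1 - (1 - α₁) * binCdf k s h₁ = h₁)
    (h₁min : ∀ x ∈ Set.Icc (0 : ℝ) 1, 1 - (1 - α₁) * binCdf k s x = x → h₁ ≤ x)
    (h₂mem : h₂ ∈ Set.Icc (0 : ℝ) 1) (h₂fix : 1 - (1 - α₂) * binCdf k s h₂ = h₂)
    (h₂min : ∀ x ∈ Set.Icc (0 : ℝ) 1, 1 - (1 - α₂) * binCdf k s x = x → h₂ ≤ x) :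
    h₁ ≤ h₂ := by
  obtain ⟨hh₂0, hh₂1⟩ := h₂mem
  obtain ⟨hα₁0, hα₁1⟩ := hα₁
  -- F x = f₁(x) - x
  set F : ℝ → ℝ := fun x => (1 - (1 - α₁) * binCdf k s x) - x with hF
  have hFcont : Continuous F := by
    apply Continuous.sub _ continuous_id
    exact Continuous.sub continuous_const
      (Continuous.mul continuous_const (binCdf_continuous k s))
  have hF0 : 0 ≤ F 0 := by
    simp only [hF, binCdf_zero]
    linarith
  have hFh₂ : F h₂ ≤ 0 := by
    have hg : 0 ≤ binCdf k s h₂ := binCdf_nonneg k s h₂ ⟨hh₂0, hh₂1⟩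
    have : (1 - α₂) * binCdf k s h₂ ≤ (1 - α₁) * binCdf k s h₂ :=
      mul_le_mul_of_nonneg_right (by linarith) hg
    simp only [hF]
    linarith [h₂fix]
  -- intermediate value
  have hsub : Set.Icc (F h₂) (F 0) ⊆ F '' Set.Icc 0 h₂ :=
    intermediate_value_Icc' hh₂0 hFcont.continuousOn
  obtain ⟨x, hxmem, hxF⟩ := hsub ⟨hFh₂, hF0⟩
  obtain ⟨hx0, hxh₂⟩ := hxmem
  have hxfix : 1 - (1 - α₁) * binCdf k s x = x := by
    have : (1 - (1 - α₁) * binCdf k s x) - x = 0 := hxF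
    linarith
  have := h₁min x ⟨hx0, le_trans hxh₂ hh₂1⟩ hxfix
  linarith
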